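/- Let $A \subset \mathbb{R}^d$ be compact with $C^{1,1}$ boundary and $\overline{A^o} = A$, and suppose $\tau > 0$ satisfies the sphere condition for $A$. Let $0 < r < \tau$ and let $x \in A$ with $a := \mathrm{dist}(x, \partial A) < r$. Then $$\Big| |B_r(x) \cap A| - \big(\tfrac{1}{2}\theta_d + h(a/r)\big) r^d \Big| \leq \frac{2\theta_{d-1} r^{d+1}}{\tau},$$ where $h(u) = |B_1(o) \cap ([0,u]\times\mathbb{R}^{d-1})|$. -/

import Mathlib

open MeasureTheory Metric Set Pointwise
open scoped RealInnerProductSpace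

/-- θ_n, the Lebesgue volume of the unit Euclidean ball in ℝ^n. -/
noncomputable def ubv (n : ℕ) : ℝ :=
  (volume (Metric.ball (0 : EuclideanSpace ℝ (Fin n)) 1)).toReal

/-- `τ` satisfies the sphere condition for `A`: at every boundary point there is a unit
(inward normal) vector `n` with `B(x+τn, τ) ⊆ A` and `B(x-τn, τ) ∩ A = {x}`. -/
def SphereCond (d : ℕ) (A : Set (EuclideanSpace ℝ (Fin d))) (τ : ℝ) : Prop :=
  ∀ x ∈ frontier A, ∃ n : EuclideanSpace ℝ (Fin d), ‖n‖ = 1 ∧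
    Metric.closedBall (x + τ • n) τ ⊆ A ∧ Metric.closedBall (x - τ • n) τ ∩ A = {x}

/-- `A ⊆ ℝ^d` has a `C^{1,1}` boundary: near every boundary point, after a rotation
(linear isometry) `A` coincides with the closed epigraph of a Lipschitz-continuously
differentiable function of the first `d-1` coordinates. -/
def HasC11Boundary (d : ℕ) (A : Set (EuclideanSpace ℝ (Fin d))) : Prop :=
  ∀ x ∈ frontier A,
    ∃ (R : EuclideanSpace ℝ (Fin d) ≃ₗᵢ[ℝ] EuclideanSpace ℝ (Fin d))
      (f : EuclideanSpace ℝ (Fin (d-1)) → ℝ) (ε : ℝ) (L : NNReal),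
      0 < ε ∧ ContDiff ℝ 1 f ∧ LipschitzWith L (fderiv ℝ f) ∧
      ∀ p : EuclideanSpace ℝ (Fin d), p ∈ Metric.ball (R x) ε →
        (p ∈ R '' A ↔
          f (WithLp.toLp 2 (fun i => p (Fin.castLE (Nat.sub_le d 1) i))) ≤
            (if h : 0 < d then p ⟨d-1, by omega⟩ else 0))

/-- The volume `h(u)` of the slab `B_1(o) ∩ ([0,u] × ℝ^{d-1})` of the unit ball in ℝ^d. -/
noncomputable def slabVol (d : ℕ) (u : ℝ) : ℝ :=
  (volume {y : EuclideanSpace ℝ (Fin d) |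
    ‖y‖ ≤ 1 ∧ ∃ h : 0 < d, y ⟨0, h⟩ ∈ Set.Icc (0:ℝ) u}).toReal

section Aux
lemma ubv_nonneg (n : ℕ) : 0 ≤ ubv n := ENNReal.toReal_nonneg

lemma ball_vol_ne_top (n : ℕ) : volume (Metric.ball (0 : EuclideanSpace ℝ (Fin n)) 1) ≠ ⊤ :=
  measure_ball_lt_top.ne

/-- volume of the Euclidean closed ball of radius ρ in ℝ^m. -/
lemma vol_closedBall_m (m : ℕ) (ρ : ℝ) (hρ : 0 ≤ ρ) :
    volume (Metric.closedBall (0 : EuclideanSpace ℝ (Fin m)) ρ)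
      = ENNReal.ofReal (ρ ^ m) * volume (Metric.ball (0 : EuclideanSpace ℝ (Fin m)) 1) := by
  have := Measure.addHaar_closedBall (volume : Measure (EuclideanSpace ℝ (Fin m)))
    (0 : EuclideanSpace ℝ (Fin m)) hρ
  simpa [finrank_euclideanSpace_fin] using this

lemma vol_closedBall_m_toReal (m : ℕ) (ρ : ℝ) (hρ : 0 ≤ ρ) :
    (volume (Metric.closedBall (0 : EuclideanSpace ℝ (Fin m)) ρ)).toReal = ρ ^ m * ubv m := by
  rw [vol_closedBall_m m ρ hρ, ENNReal.toReal_mul, ENNReal.toReal_ofReal (by positivity)]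
  rfl

/-- Cylinder volume via Fubini. -/
lemma vol_cylinder (m : ℕ) (c₁ c₂ ρ : ℝ) :
    volume {u : EuclideanSpace ℝ (Fin (m+1)) |
        u 0 ∈ Icc c₁ c₂ ∧ Real.sqrt (∑ i : Fin m, u i.succ ^ 2) ≤ ρ}
      = ENNReal.ofReal (c₂ - c₁) * volume (Metric.closedBall (0 : EuclideanSpace ℝ (Fin m)) ρ) := by
  classical
  set T : Set (Fin m → ℝ) := {w | Real.sqrt (∑ i, w i ^ 2) ≤ ρ} with hT
  have hTm : MeasurableSet T := by
    have : Continuous fun w : Fin m → ℝ => Real.sqrt (∑ i, w i ^ 2) := by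
      exact Real.continuous_sqrt.comp (by continuity)
    exact isClosed_le this continuous_const |>.measurableSet
  -- step 1: transfer to Pi space
  set Spi : Set (Fin (m+1) → ℝ) :=
    {v | v 0 ∈ Icc c₁ c₂ ∧ Real.sqrt (∑ i : Fin m, v i.succ ^ 2) ≤ ρ} with hSpi
  have hSpim : MeasurableSet Spi := by
    apply MeasurableSet.inter
    · exact (measurable_pi_apply 0) measurableSet_Icc
    · have : Continuous fun v : Fin (m+1) → ℝ => Real.sqrt (∑ i : Fin m, v i.succ ^ 2) := by
        exact Real.continuous_sqrt.comp (by continuity)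
      exact isClosed_le this continuous_const |>.measurableSet
  have h1 : volume {u : EuclideanSpace ℝ (Fin (m+1)) |
        u 0 ∈ Icc c₁ c₂ ∧ Real.sqrt (∑ i : Fin m, u i.succ ^ 2) ≤ ρ}
      = volume Spi := by
    have hpre : {u : EuclideanSpace ℝ (Fin (m+1)) |
        u 0 ∈ Icc c₁ c₂ ∧ Real.sqrt (∑ i : Fin m, u i.succ ^ 2) ≤ ρ}
        = (MeasurableEquiv.toLp 2 (Fin (m+1) → ℝ)).symm ⁻¹' Spi := rfl
    rw [hpre,
      (EuclideanSpace.volume_preserving_symm_measurableEquiv_toLp (Fin (m+1))).measure_preimage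
        hSpim.nullMeasurableSet]
  -- step 2: Fubini
  have h2 : volume Spi = ENNReal.ofReal (c₂ - c₁) * volume T := by
    have hpre : Spi = (MeasurableEquiv.piFinSuccAbove (fun _ : Fin (m+1) => ℝ) 0) ⁻¹'
        ((Icc c₁ c₂) ×ˢ T) := by
      ext v
      simp [MeasurableEquiv.piFinSuccAbove, Spi, T, Fin.zero_succAbove, Fin.tail]
    rw [hpre, (volume_preserving_piFinSuccAbove (fun _ : Fin (m+1) => ℝ) 0).measure_preimage
        ((measurableSet_Icc.prod hTm).nullMeasurableSet)]
    rw [MeasureTheory.Measure.volume_eq_prod, Measure.prod_prod, Real.volume_Icc]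
  -- step 3: T is the closed ball
  have h3 : volume T = volume (Metric.closedBall (0 : EuclideanSpace ℝ (Fin m)) ρ) := by
    have hpre : Metric.closedBall (0 : EuclideanSpace ℝ (Fin m)) ρ
        = (MeasurableEquiv.toLp 2 (Fin m → ℝ)).symm ⁻¹' T := by
      ext u
      simp only [Metric.mem_closedBall, dist_zero_right, mem_preimage, hT, mem_setOf_eq]
      rw [EuclideanSpace.norm_eq]
      norm_num [MeasurableEquiv.coe_toLp_symm]
    rw [hpre] at *
    rw [← (EuclideanSpace.volume_preserving_symm_measurableEquiv_toLp (Fin m)).measure_preimage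
        hTm.nullMeasurableSet]
  rw [h1, h2, h3]

/-- An orthonormal basis of ℝ^{m+1} whose 0-th vector is a prescribed unit vector. -/
lemma exists_onb_zero (m : ℕ) (n : EuclideanSpace ℝ (Fin (m+1))) (hn : ‖n‖ = 1) :
    ∃ b : OrthonormalBasis (Fin (m+1)) ℝ (EuclideanSpace ℝ (Fin (m+1))), b 0 = n := by
  have hcard : Module.finrank ℝ (EuclideanSpace ℝ (Fin (m+1))) = Fintype.card (Fin (m+1)) := by
    simp [finrank_euclideanSpace_fin]
  have horth : Orthonormal ℝ (({0} : Set (Fin (m+1))).restrict (fun _ => n)) := by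
    constructor
    · intro i
      exact hn
    · intro i j hij
      exact absurd (Subsingleton.elim i j) hij
  obtain ⟨b, hb⟩ := horth.exists_orthonormalBasis_extension_of_card_eq hcard
  exact ⟨b, hb 0 rfl⟩

/-- The cap set {u ∈ B̄(0,1) : u₀ ≥ c}. -/
def capSet (m : ℕ) (c : ℝ) : Set (EuclideanSpace ℝ (Fin (m+1))) := {u | ‖u‖ ≤ 1 ∧ c ≤ u 0}

lemma capSet_measurable (m : ℕ) (c : ℝ) : MeasurableSet (capSet m c) := by
  apply MeasurableSet.inter
  · exact isClosed_le continuous_norm continuous_const |>.measurableSet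
  · exact isClosed_le continuous_const (EuclideanSpace.proj 0).continuous |>.measurableSet

lemma capSet_subset_cb (m : ℕ) (c : ℝ) :
    capSet m c ⊆ Metric.closedBall (0 : EuclideanSpace ℝ (Fin (m+1))) 1 := fun u hu => by
  simpa [Metric.mem_closedBall, dist_zero_right] using hu.1

lemma capSet_vol_ne_top (m : ℕ) (c : ℝ) : volume (capSet m c) ≠ ⊤ :=
  ((measure_mono (capSet_subset_cb m c)).trans_lt measure_closedBall_lt_top).ne

/-- Reflecting the 0-th coordinate preserves the volume of sets of the given form. -/
lemma vol_neg_coord (m : ℕ) (s : Set ℝ) (hs : MeasurableSet s) :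
    volume {u : EuclideanSpace ℝ (Fin (m+1)) | ‖u‖ ≤ 1 ∧ u 0 ∈ s}
      = volume {u : EuclideanSpace ℝ (Fin (m+1)) | ‖u‖ ≤ 1 ∧ -u 0 ∈ s} := by
  obtain ⟨b, hb⟩ := exists_onb_zero m (-(EuclideanSpace.single 0 1)) (by simp)
  have hmeas : MeasurableSet {v : EuclideanSpace ℝ (Fin (m+1)) | ‖v‖ ≤ 1 ∧ v 0 ∈ s} := by
    apply MeasurableSet.inter
    · exact isClosed_le continuous_norm continuous_const |>.measurableSet
    · exact (EuclideanSpace.proj (0 : Fin (m+1))).continuous.measurable hs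
  have key : {u : EuclideanSpace ℝ (Fin (m+1)) | ‖u‖ ≤ 1 ∧ -u 0 ∈ s}
      = ⇑b.repr ⁻¹' {v | ‖v‖ ≤ 1 ∧ v 0 ∈ s} := by
    ext u
    have h0 : b.repr u 0 = -u 0 := by
      rw [b.repr_apply_apply, hb]
      rw [inner_neg_left, EuclideanSpace.inner_single_left]
      simp
    simp [mem_preimage, h0]
  rw [key, b.measurePreserving_repr.measure_preimage hmeas.nullMeasurableSet]

lemma two_vol_capSet_zero (m : ℕ) :
    2 * (volume (capSet m 0)).toReal = ubv (m+1) := by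
  have hrefl := vol_neg_coord m (Ici 0) measurableSet_Ici
  have hneg : {u : EuclideanSpace ℝ (Fin (m+1)) | ‖u‖ ≤ 1 ∧ -u 0 ∈ Ici 0}
      = {u : EuclideanSpace ℝ (Fin (m+1)) | ‖u‖ ≤ 1 ∧ u 0 ≤ 0} := by
    ext u; simp [neg_nonneg]
  rw [hneg] at hrefl
  have hcap : capSet m 0 = {u : EuclideanSpace ℝ (Fin (m+1)) | ‖u‖ ≤ 1 ∧ u 0 ∈ Ici 0} := by
    ext u; simp [capSet]
  -- union is the closed unit ball
  set S := capSet m 0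
  set S' := {u : EuclideanSpace ℝ (Fin (m+1)) | ‖u‖ ≤ 1 ∧ u 0 ≤ 0}
  have hunion : S ∪ S' = Metric.closedBall (0 : EuclideanSpace ℝ (Fin (m+1))) 1 := by
    ext u
    simp only [S, S', capSet, mem_union, mem_setOf_eq, Metric.mem_closedBall, dist_zero_right]
    rcases le_total (0:ℝ) (u 0) with h | h <;> tauto
  have hS'm : MeasurableSet S' := by
    apply MeasurableSet.inter
    · exact isClosed_le continuous_norm continuous_const |>.measurableSet
    · exact isClosed_le (EuclideanSpace.proj 0).continuous continuous_const |>.measurableSet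
  -- intersection is in a hyperplane, hence null
  have hker : volume (S ∩ S') = 0 := by
    have hsub : S ∩ S' ⊆ (LinearMap.ker ((EuclideanSpace.proj (0 : Fin (m+1)) :
        EuclideanSpace ℝ (Fin (m+1)) →L[ℝ] ℝ) : EuclideanSpace ℝ (Fin (m+1)) →ₗ[ℝ] ℝ) :
        Set (EuclideanSpace ℝ (Fin (m+1)))) := by
      rintro u ⟨⟨-, h1⟩, ⟨-, h2⟩⟩
      have : u 0 = 0 := le_antisymm h2 h1
      simpa [LinearMap.mem_ker] using this
    refine measure_mono_null hsub ?_
    apply Measure.addHaar_submodule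
    intro htop
    have : EuclideanSpace.single (0 : Fin (m+1)) (1:ℝ) ∈ (⊤ : Submodule ℝ _) := trivial
    rw [← htop, LinearMap.mem_ker] at this
    simp at this
  have hadd := measure_union_add_inter S hS'm (μ := volume)
  rw [hunion, hker, add_zero] at hadd
  have hcb : volume (Metric.closedBall (0 : EuclideanSpace ℝ (Fin (m+1))) 1)
      = volume (Metric.ball (0 : EuclideanSpace ℝ (Fin (m+1))) 1) :=
    Measure.addHaar_closedBall_eq_addHaar_ball volume 0 1
  rw [hcb] at hadd
  have hSS' : volume S' = volume S := by
    rw [← hrefl, ← hcap]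
  rw [hSS'] at hadd
  have hfin : volume S ≠ ⊤ := capSet_vol_ne_top m 0
  have : (volume S).toReal + (volume S).toReal = ubv (m+1) := by
    rw [← ENNReal.toReal_add hfin hfin, ← hadd]; rfl
  linarith

lemma vol_capSet_neg (m : ℕ) (w : ℝ) (hw : 0 ≤ w) :
    (volume (capSet m (-w))).toReal = (volume (capSet m 0)).toReal
      + (volume {u : EuclideanSpace ℝ (Fin (m+1)) | ‖u‖ ≤ 1 ∧ u 0 ∈ Icc 0 w}).toReal := by
  set S := capSet m 0
  set Sl := {u : EuclideanSpace ℝ (Fin (m+1)) | ‖u‖ ≤ 1 ∧ u 0 ∈ Icc (-w) 0}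
  have hSlm : MeasurableSet Sl := by
    apply MeasurableSet.inter
    · exact isClosed_le continuous_norm continuous_const |>.measurableSet
    · exact (EuclideanSpace.proj (0 : Fin (m+1))).continuous.measurable measurableSet_Icc
  have hunion : capSet m (-w) = S ∪ Sl := by
    ext u
    simp only [capSet, S, Sl, mem_union, mem_setOf_eq, mem_Icc]
    constructor
    · rintro ⟨h1, h2⟩
      rcases le_total (0:ℝ) (u 0) with h | h
      · exact Or.inl ⟨h1, h⟩
      · exact Or.inr ⟨h1, h2, h⟩
    · rintro (⟨h1, h2⟩ | ⟨h1, h2, h3⟩)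
      · exact ⟨h1, le_trans (neg_nonpos.mpr hw) h2⟩
      · exact ⟨h1, h2⟩
  have hker : volume (S ∩ Sl) = 0 := by
    have hsub : S ∩ Sl ⊆ (LinearMap.ker ((EuclideanSpace.proj (0 : Fin (m+1)) :
        EuclideanSpace ℝ (Fin (m+1)) →L[ℝ] ℝ) : EuclideanSpace ℝ (Fin (m+1)) →ₗ[ℝ] ℝ) :
        Set (EuclideanSpace ℝ (Fin (m+1)))) := by
      rintro u ⟨⟨-, h1⟩, ⟨-, h2, h3⟩⟩
      have : u 0 = 0 := le_antisymm h3 h1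
      simpa [LinearMap.mem_ker] using this
    refine measure_mono_null hsub ?_
    apply Measure.addHaar_submodule
    intro htop
    have : EuclideanSpace.single (0 : Fin (m+1)) (1:ℝ) ∈ (⊤ : Submodule ℝ _) := trivial
    rw [← htop, LinearMap.mem_ker] at this
    simp at this
  have hadd := measure_union_add_inter S hSlm (μ := volume)
  rw [hker, add_zero] at hadd
  have hSl : volume Sl
      = volume {u : EuclideanSpace ℝ (Fin (m+1)) | ‖u‖ ≤ 1 ∧ u 0 ∈ Icc 0 w} := by
    have := vol_neg_coord m (Icc 0 w) measurableSet_Icc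
    have hneg : {u : EuclideanSpace ℝ (Fin (m+1)) | ‖u‖ ≤ 1 ∧ -u 0 ∈ Icc 0 w} = Sl := by
      ext u
      simp only [Sl, mem_setOf_eq, mem_Icc, neg_nonneg]
      constructor
      · rintro ⟨h1, h2, h3⟩; exact ⟨h1, by linarith, h2⟩
      · rintro ⟨h1, h2, h3⟩; exact ⟨h1, h3, by linarith⟩
    rw [hneg] at this
    exact this.symm
  have hfinS : volume S ≠ ⊤ := capSet_vol_ne_top m 0
  have hfinSl : volume Sl ≠ ⊤ := by
    refine ((measure_mono ?_).trans_lt (measure_closedBall_lt_top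
      (x := (0 : EuclideanSpace ℝ (Fin (m+1)))) (r := 1))).ne
    rintro u ⟨h1, -⟩
    simpa [Metric.mem_closedBall, dist_zero_right] using h1
  rw [← hunion] at hadd
  rw [← hSl, hadd, ENNReal.toReal_add hfinS hfinSl]

lemma vol_image_isometry_add (m : ℕ) (x : EuclideanSpace ℝ (Fin (m+1)))
    (b : OrthonormalBasis (Fin (m+1)) ℝ (EuclideanSpace ℝ (Fin (m+1))))
    {S : Set (EuclideanSpace ℝ (Fin (m+1)))} (hS : MeasurableSet S) :
    volume ((fun v => x + b.repr.symm v) '' S) = volume S := by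
  have h1 : (fun v => x + b.repr.symm v) '' S = (fun y => b.repr (y - x)) ⁻¹' S := by
    ext y
    constructor
    · rintro ⟨v, hv, rfl⟩
      simpa using hv
    · intro hy
      exact ⟨b.repr (y - x), hy, by simp⟩
  have h2 : (fun y => b.repr (y - x)) ⁻¹' S = (fun y => y + (-x)) ⁻¹' (⇑b.repr ⁻¹' S) := by
    ext y; simp [sub_eq_add_neg]
  rw [h1, h2, measure_preimage_add_right,
    b.measurePreserving_repr.measure_preimage hS.nullMeasurableSet]

lemma smul_set_measurable {m : ℕ} {r : ℝ} (hr : r ≠ 0)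
    {S : Set (EuclideanSpace ℝ (Fin (m+1)))} (hS : MeasurableSet S) :
    MeasurableSet (r • S) := by
  have : r • S = (fun v : EuclideanSpace ℝ (Fin (m+1)) => r⁻¹ • v) ⁻¹' S := by
    ext v; simp [Set.mem_smul_set_iff_inv_smul_mem₀ hr]
  rw [this]
  exact (continuous_const_smul _).measurable hS

lemma repr_apply_zero {m : ℕ} (b : OrthonormalBasis (Fin (m+1)) ℝ (EuclideanSpace ℝ (Fin (m+1))))
    (n : EuclideanSpace ℝ (Fin (m+1))) (hb : b 0 = n) (w : EuclideanSpace ℝ (Fin (m+1))) :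
    b.repr w 0 = ⟪w, n⟫ := by
  rw [b.repr_apply_apply, hb, real_inner_comm]

lemma vol_ball_halfspace (m : ℕ) (x n : EuclideanSpace ℝ (Fin (m+1))) (hn : ‖n‖ = 1)
    (r : ℝ) (hr : 0 < r) (c : ℝ)
    (b : OrthonormalBasis (Fin (m+1)) ℝ (EuclideanSpace ℝ (Fin (m+1)))) (hb : b 0 = n) :
    volume (Metric.closedBall x r ∩ {y | c ≤ ⟪y - x, n⟫})
      = ENNReal.ofReal (r ^ (m+1)) * volume (capSet m (c / r)) := by
  have hset : Metric.closedBall x r ∩ {y | c ≤ ⟪y - x, n⟫}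
      = (fun v => x + b.repr.symm v) '' (r • capSet m (c / r)) := by
    ext y
    have himg : y ∈ (fun v => x + b.repr.symm v) '' (r • capSet m (c / r))
        ↔ b.repr (y - x) ∈ r • capSet m (c / r) := by
      constructor
      · rintro ⟨v, hv, rfl⟩; simpa using hv
      · intro hy; exact ⟨b.repr (y - x), hy, by simp⟩
    rw [himg, Set.mem_smul_set_iff_inv_smul_mem₀ hr.ne']
    have hz : (r⁻¹ • b.repr (y - x)) 0 = r⁻¹ * ⟪y - x, n⟫ := by
      rw [PiLp.smul_apply, repr_apply_zero b n hb, smul_eq_mul]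
    constructor
    · rintro ⟨h1, h2⟩
      refine ⟨?_, ?_⟩
      · rw [norm_smul, norm_inv, Real.norm_eq_abs, abs_of_pos hr, b.repr.norm_map]
        rw [mem_closedBall_iff_norm] at h1
        calc r⁻¹ * ‖y - x‖ ≤ r⁻¹ * r := by
              exact mul_le_mul_of_nonneg_left h1 (by positivity)
          _ = 1 := inv_mul_cancel₀ hr.ne'
      · rw [hz, div_eq_inv_mul]
        exact mul_le_mul_of_nonneg_left h2 (by positivity)
    · rintro ⟨h1, h2⟩
      rw [norm_smul, norm_inv, Real.norm_eq_abs, abs_of_pos hr, b.repr.norm_map] at h1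
      rw [hz, div_eq_inv_mul] at h2
      refine ⟨?_, ?_⟩
      · rw [mem_closedBall_iff_norm]
        calc ‖y - x‖ = r * (r⁻¹ * ‖y - x‖) := by field_simp
          _ ≤ r * 1 := mul_le_mul_of_nonneg_left h1 hr.le
          _ = r := mul_one r
      · have := mul_le_mul_of_nonneg_left h2 hr.le
        rw [← mul_assoc, ← mul_assoc, mul_inv_cancel₀ hr.ne', one_mul, one_mul] at this
        exact this
  rw [hset, vol_image_isometry_add m x b (smul_set_measurable hr.ne' (capSet_measurable _ _)),
    Measure.addHaar_smul]
  congr 1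
  rw [finrank_euclideanSpace_fin, abs_of_pos (by positivity)]

lemma vol_ball_slab (m : ℕ) (x n : EuclideanSpace ℝ (Fin (m+1))) (hn : ‖n‖ = 1)
    (r : ℝ) (hr : 0 < r) (c₁ c₂ : ℝ)
    (b : OrthonormalBasis (Fin (m+1)) ℝ (EuclideanSpace ℝ (Fin (m+1)))) (hb : b 0 = n) :
    volume (Metric.closedBall x r ∩ {y | ⟪y - x, n⟫ ∈ Icc c₁ c₂})
      ≤ ENNReal.ofReal (c₂ - c₁) * volume (Metric.closedBall (0 : EuclideanSpace ℝ (Fin m)) r) := by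
  set Cyl : Set (EuclideanSpace ℝ (Fin (m+1))) :=
    {u | u 0 ∈ Icc c₁ c₂ ∧ Real.sqrt (∑ i : Fin m, u i.succ ^ 2) ≤ r} with hCyl
  have hCylm : MeasurableSet Cyl := by
    apply MeasurableSet.inter
    · exact (isClosed_Icc.preimage (EuclideanSpace.proj (0 : Fin (m+1))).continuous).measurableSet
    · have hcont : Continuous fun u : EuclideanSpace ℝ (Fin (m+1)) =>
          Real.sqrt (∑ i : Fin m, u i.succ ^ 2) := by
        refine Real.continuous_sqrt.comp (continuous_finset_sum _ fun i _ => ?_)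
        exact ((EuclideanSpace.proj (i.succ : Fin (m+1))).continuous).pow 2
      exact (isClosed_le hcont continuous_const).measurableSet
  have hsub : Metric.closedBall x r ∩ {y | ⟪y - x, n⟫ ∈ Icc c₁ c₂}
      ⊆ (fun v => x + b.repr.symm v) '' Cyl := by
    rintro y ⟨hy1, hy2⟩
    refine ⟨b.repr (y - x), ⟨?_, ?_⟩, by simp⟩
    · rw [repr_apply_zero b n hb]; exact hy2
    · set u := b.repr (y - x) with hu
      have hnorm : ‖u‖ ≤ r := by
        rw [hu, b.repr.norm_map, ← mem_closedBall_iff_norm]; exact hy1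
      have hsum : ∑ j : Fin (m+1), u j ^ 2 = ‖u‖ ^ 2 := by
        rw [EuclideanSpace.norm_eq, Real.sq_sqrt (by positivity)]
        simp [Real.norm_eq_abs, sq_abs]
      have hsplit : (∑ j : Fin (m+1), u j ^ 2) = u 0 ^ 2 + ∑ i : Fin m, u i.succ ^ 2 :=
        Fin.sum_univ_succ _
      have h1 : ∑ i : Fin m, u i.succ ^ 2 ≤ r ^ 2 := by
        have h2 : ‖u‖ ^ 2 ≤ r ^ 2 := by
          exact pow_le_pow_left₀ (norm_nonneg u) hnorm 2
        nlinarith [sq_nonneg (u 0)]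
      calc Real.sqrt (∑ i : Fin m, u i.succ ^ 2) ≤ Real.sqrt (r ^ 2) := Real.sqrt_le_sqrt h1
        _ = r := by rw [Real.sqrt_sq hr.le]
  calc volume (Metric.closedBall x r ∩ {y | ⟪y - x, n⟫ ∈ Icc c₁ c₂})
      ≤ volume ((fun v => x + b.repr.symm v) '' Cyl) := measure_mono hsub
    _ = volume Cyl := vol_image_isometry_add m x b hCylm
    _ = ENNReal.ofReal (c₂ - c₁) * volume (Metric.closedBall (0 : EuclideanSpace ℝ (Fin m)) r) :=
        vol_cylinder m c₁ c₂ r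

/-- If two open balls are disjoint (radii positive, `a ≤ τ`), centers are far apart. -/
lemma dist_of_disjoint_balls {E : Type*} [NormedAddCommGroup E] [NormedSpace ℝ E]
    {x c : E} {a τ : ℝ} (ha : 0 < a) (hτ : 0 < τ) (haτ : a ≤ τ)
    (h : Disjoint (Metric.ball x a) (Metric.ball c τ)) : a + τ ≤ dist x c := by
  by_contra hlt
  push_neg at hlt
  set D := dist x c with hD
  have hD0 : 0 ≤ D := dist_nonneg
  rcases le_or_gt (D + a - τ) 0 with hcase | hcase
  · -- x itself is in both balls
    have hx1 : x ∈ Metric.ball x a := mem_ball_self ha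
    have hx2 : x ∈ Metric.ball c τ := by
      rw [mem_ball]
      linarith
    exact (Set.disjoint_left.mp h hx1) hx2
  · have hDpos : 0 < D := by linarith
    set t := (D + a - τ) / 2 with ht
    have ht0 : 0 < t := by positivity
    have htA : t < a := by rw [ht]; linarith
    have htD : t ≤ D := by rw [ht]; linarith
    set p := x + (t / D) • (c - x) with hp
    have hp1 : dist p x = t := by
      rw [dist_eq_norm, hp]
      simp only [add_sub_cancel_left]
      rw [norm_smul, Real.norm_eq_abs, abs_of_pos (by positivity), ← dist_eq_norm']
      rw [← hD]
      field_simp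
    have hp2 : dist p c = D - t := by
      have : p - c = (1 - t / D) • (x - c) := by
        rw [hp]
        have hcx : c - x = -(x - c) := by abel
        rw [hcx, smul_neg]
        module
      rw [dist_eq_norm, this, norm_smul, Real.norm_eq_abs, ← dist_eq_norm, ← hD]
      rw [abs_of_nonneg (by rw [sub_nonneg]; exact div_le_one_of_le₀ htD hD0)]
      field_simp
    have hpb1 : p ∈ Metric.ball x a := by rw [mem_ball, hp1]; exact htA
    have hpb2 : p ∈ Metric.ball c τ := by
      rw [mem_ball, hp2, ht]
      linarith
    exact (Set.disjoint_left.mp h hpb1) hpb2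

lemma exists_normal_point (d : ℕ) (hd : 1 ≤ d) (A : Set (EuclideanSpace ℝ (Fin d)))
    (hAc : IsCompact A) (τ : ℝ) (hτ : 0 < τ) (hsc : SphereCond d A τ)
    (x : EuclideanSpace ℝ (Fin d)) (hx : x ∈ A)
    (haτ : Metric.infDist x (frontier A) ≤ τ) :
    ∃ z n, z ∈ frontier A ∧ ‖n‖ = 1 ∧ x = z + (Metric.infDist x (frontier A)) • n ∧
      Metric.closedBall (z + τ • n) τ ⊆ A ∧ Metric.closedBall (z - τ • n) τ ∩ A = {z} := by
  haveI : Nonempty (Fin d) := ⟨⟨0, by omega⟩⟩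
  haveI : Nontrivial (EuclideanSpace ℝ (Fin d)) := by
    refine ⟨0, EuclideanSpace.single ⟨0, by omega⟩ (1:ℝ), fun h => ?_⟩
    have := congrArg (fun v : EuclideanSpace ℝ (Fin d) => v ⟨0, by omega⟩) h
    simpa using this
  set a := Metric.infDist x (frontier A) with haa
  have hAclosed : IsClosed A := hAc.isClosed
  have hAne : A.Nonempty := ⟨x, hx⟩
  have hAneu : A ≠ univ := fun h => NoncompactSpace.noncompact_univ (h ▸ hAc)
  have hfrne : (frontier A).Nonempty := by
    by_contra hemp
    rw [Set.not_nonempty_iff_eq_empty] at hemp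
    have hclopen : IsClopen A := by
      constructor
      · exact hAclosed
      · have hsub : A ⊆ interior A := by
          intro y hy
          by_contra hyi
          have hyf : y ∈ frontier A := ⟨subset_closure hy, hyi⟩
          simp [hemp] at hyf
        have : interior A = A := subset_antisymm interior_subset hsub
        rw [← this]
        exact isOpen_interior
    rcases isClopen_iff.mp hclopen with h | h
    · exact hAne.ne_empty h
    · exact hAneu h
  have hfrc : IsCompact (frontier A) :=
    hAc.of_isClosed_subset isClosed_frontier (hAclosed.frontier_subset)
  obtain ⟨z, hz, hzd⟩ := hfrc.exists_infDist_eq_dist hfrne x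
  rcases eq_or_lt_of_le (Metric.infDist_nonneg (s := frontier A) (x := x)) with ha0 | ha0
  · -- a = 0 : x is itself on the frontier
    have hxf : x ∈ frontier A :=
      (isClosed_frontier.mem_iff_infDist_zero hfrne).mpr ha0.symm
    obtain ⟨n, hn, hin, hout⟩ := hsc x hxf
    refine ⟨x, n, hxf, hn, ?_, hin, hout⟩
    have ha0' : a = 0 := by rw [haa, ← ha0]
    rw [ha0']
    simp
  · -- a > 0
    obtain ⟨n, hn, hin, hout⟩ := hsc z hz
    -- the open exterior ball misses A
    have hext : Metric.ball (z - τ • n) τ ∩ A = ∅ := by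
      ext y
      simp only [mem_inter_iff, mem_empty_iff_false, iff_false, not_and]
      intro hy1 hy2
      have : y ∈ Metric.closedBall (z - τ • n) τ ∩ A := ⟨ball_subset_closedBall hy1, hy2⟩
      rw [hout] at this
      rw [this] at hy1
      rw [mem_ball, dist_eq_norm] at hy1
      have : z - (z - τ • n) = τ • n := by abel
      rw [this, norm_smul, Real.norm_eq_abs, abs_of_pos hτ, hn, mul_one] at hy1
      exact lt_irrefl τ hy1
    -- the open ball around x of radius a is inside A
    have hball : Metric.ball x a ⊆ A := by
      have hxi : x ∈ interior A := by
        have hxnf : x ∉ frontier A := by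
          intro hxf
          have h2 := Metric.infDist_le_dist_of_mem (x := x) hxf
          rw [dist_self] at h2
          linarith [haa ▸ ha0]
        by_contra hxi
        exact hxnf ⟨subset_closure hx, hxi⟩
      have hcover : Metric.ball x a ⊆ interior A ∪ Aᶜ := by
        intro y hy
        by_cases hyA : y ∈ A
        · left
          by_contra hyi
          have hyf : y ∈ frontier A := ⟨subset_closure hyA, hyi⟩
          have h2 := Metric.infDist_le_dist_of_mem (x := x) hyf
          rw [mem_ball, dist_comm] at hy
          rw [haa] at hy
          linarith
        · right; exact hyA
      have hconn : IsPreconnected (Metric.ball x a) :=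
        ((convex_ball x a).isPathConnected ⟨x, mem_ball_self ha0⟩).isConnected.isPreconnected
      have hsub := hconn.subset_left_of_subset_union isOpen_interior
        hAclosed.isOpen_compl (disjoint_compl_right.mono_left interior_subset) hcover
        ⟨x, mem_ball_self ha0, hxi⟩
      exact hsub.trans interior_subset
    -- disjointness gives distance bound
    have hdisj : Disjoint (Metric.ball x a) (Metric.ball (z - τ • n) τ) := by
      rw [Set.disjoint_left]
      intro y hy1 hy2
      have : y ∈ Metric.ball (z - τ • n) τ ∩ A := ⟨hy2, hball hy1⟩
      rw [hext] at this
      exact this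
    have hdge : a + τ ≤ dist x (z - τ • n) := dist_of_disjoint_balls ha0 hτ haτ hdisj
    have hdle : dist x (z - τ • n) ≤ a + τ := by
      calc dist x (z - τ • n) ≤ dist x z + dist z (z - τ • n) := dist_triangle _ _ _
        _ = a + τ := by
            rw [← hzd, ← haa]
            congr 1
            rw [dist_eq_norm]
            have : z - (z - τ • n) = τ • n := by abel
            rw [this, norm_smul, Real.norm_eq_abs, abs_of_pos hτ, hn, mul_one]
    have hdeq : dist x (z - τ • n) = a + τ := le_antisymm hdle hdge
    -- same-ray argument
    have hxz : ‖x - z‖ = a := by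
      rw [← dist_eq_norm, ← hzd, haa]
    have hτn : ‖τ • n‖ = τ := by
      rw [norm_smul, Real.norm_eq_abs, abs_of_pos hτ, hn, mul_one]
    have hray : SameRay ℝ (x - z) (τ • n) := by
      rw [sameRay_iff_norm_add]
      have h1 : x - z + τ • n = x - (z - τ • n) := by abel
      rw [h1, ← dist_eq_norm, hdeq, hxz, hτn]
    have hτn0 : τ • n ≠ 0 := by
      intro h
      rw [h, norm_zero] at hτn
      linarith
    obtain ⟨c, hc0, hc⟩ := hray.exists_nonneg_right hτn0
    -- x - z = c • τ • n, and taking norms c * τ = a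
    have hcnorm : c * τ = a := by
      have := congrArg norm hc
      rw [hxz, norm_smul, Real.norm_eq_abs, abs_of_nonneg hc0, hτn] at this
      linarith
    refine ⟨z, n, hz, hn, ?_, hin, hout⟩
    have : a • n = (c * τ) • n := by rw [hcnorm]
    rw [this, ← smul_smul, ← hc]
    abel

end Aux

set_option maxHeartbeats 2000000 in
/-- sliced-ball volume estimate near the boundary. -/
theorem ball_inter_volume_estimate (d : ℕ) (hd : 1 ≤ d)
    (A : Set (EuclideanSpace ℝ (Fin d))) (hAc : IsCompact A)
    (hC11 : HasC11Boundary d A) (hreg : closure (interior A) = A)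
    (τ : ℝ) (hτ : 0 < τ) (hsc : SphereCond d A τ)
    (r : ℝ) (hr0 : 0 < r) (hrτ : r < τ)
    (x : EuclideanSpace ℝ (Fin d)) (hx : x ∈ A)
    (a : ℝ) (ha : a = Metric.infDist x (frontier A)) (har : a < r) :
    |(volume (Metric.closedBall x r ∩ A)).toReal
        - ((ubv d / 2 + slabVol d (a / r)) * r ^ d)|
      ≤ 2 * ubv (d-1) * r ^ (d+1) / τ := by
  obtain ⟨m, rfl⟩ : ∃ m, d = m + 1 := ⟨d - 1, by omega⟩
  have ha0 : 0 ≤ a := ha ▸ Metric.infDist_nonneg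
  obtain ⟨z, n, hz, hn, hxzn, hin, hout⟩ :=
    exists_normal_point (m+1) hd A hAc τ hτ hsc x hx (by rw [← ha]; linarith)
  rw [← ha] at hxzn
  obtain ⟨b, hb⟩ := exists_onb_zero m n hn
  set δp : ℝ := 3 * r ^ 2 / (2 * τ) with hδp
  set δm : ℝ := r ^ 2 / (2 * τ) with hδm
  have hδp0 : 0 < δp := by positivity
  have hδm0 : 0 < δm := by positivity
  -- the inner product with n of y - z equals ⟪y - x, n⟫ + a
  have hnn : ⟪n, n⟫ = (1:ℝ) := by
    rw [real_inner_self_eq_norm_sq, hn]; norm_num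
  -- inclusion 1 : deep halfspace ⊆ A
  have hIncl1 : Metric.closedBall x r ∩ {y | δp - a ≤ ⟪y - x, n⟫}
      ⊆ Metric.closedBall x r ∩ A := by
    rintro y ⟨hy1, hy2⟩
    refine ⟨hy1, hin ?_⟩
    set t : ℝ := ⟪y - x, n⟫ with htdef
    have hw2 : ‖y - x‖ ^ 2 ≤ r ^ 2 := by
      have := mem_closedBall_iff_norm.mp hy1
      exact pow_le_pow_left₀ (norm_nonneg _) this 2
    have hts : 3 * r ^ 2 ≤ 2 * τ * (t + a) := by
      have h2 : δp ≤ t + a := by have := hy2; simp only [mem_setOf_eq] at this; linarith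
      rw [hδp, div_le_iff₀ (by positivity)] at h2
      linarith
    have hyz : y - (z + τ • n) = (y - x) - (τ - a) • n := by
      rw [hxzn]; module
    rw [mem_closedBall_iff_norm, hyz]
    have hnorm2 : ‖(y - x) - (τ - a) • n‖ ^ 2 = ‖y - x‖ ^ 2 - 2 * ((τ - a) * t) + (τ - a) ^ 2 := by
      rw [norm_sub_sq_real, real_inner_smul_right, norm_smul, Real.norm_eq_abs,
        abs_of_nonneg (by linarith), hn, mul_one, ← htdef]
      try ring
    have hsq : ‖(y - x) - (τ - a) • n‖ ^ 2 ≤ τ ^ 2 := by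
      rw [hnorm2]
      nlinarith [mul_nonneg (by linarith : (0:ℝ) ≤ τ - a) (by linarith : (0:ℝ) ≤ 2*τ*(t+a) - 3*r^2),
        mul_nonneg (by linarith : (0:ℝ) ≤ τ - r) (by positivity : (0:ℝ) ≤ 2*r^2 + a^2),
        mul_nonneg (mul_nonneg hr0.le (by linarith : (0:ℝ) ≤ 2*r - a)) (by linarith : (0:ℝ) ≤ r - a)]
    calc ‖(y - x) - (τ - a) • n‖ = √(‖(y - x) - (τ - a) • n‖ ^ 2) := by
          rw [Real.sqrt_sq (norm_nonneg _)]
      _ ≤ √(τ ^ 2) := Real.sqrt_le_sqrt hsq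
      _ = τ := Real.sqrt_sq hτ.le
  -- inclusion 2 : A ∩ ball ⊆ shallow halfspace
  have hIncl2 : Metric.closedBall x r ∩ A
      ⊆ Metric.closedBall x r ∩ {y | -δm - a ≤ ⟪y - x, n⟫} := by
    rintro y ⟨hy1, hy2⟩
    refine ⟨hy1, ?_⟩
    simp only [mem_setOf_eq]
    by_contra hcon
    push_neg at hcon
    set t : ℝ := ⟪y - x, n⟫ with htdef
    have hw2 : ‖y - x‖ ^ 2 ≤ r ^ 2 := by
      have := mem_closedBall_iff_norm.mp hy1
      exact pow_le_pow_left₀ (norm_nonneg _) this 2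
    have ht2 : 2 * τ * (t + a) ≤ -(r ^ 2) := by
      have h2 : t + a ≤ -δm := by linarith
      rw [hδm] at h2
      have h3 := mul_le_mul_of_nonneg_left h2 (by positivity : (0:ℝ) ≤ 2 * τ)
      have h4 : 2 * τ * -(r ^ 2 / (2 * τ)) = -(r ^ 2) := by field_simp
      linarith
    have hta : t + a ≤ 0 := by nlinarith
    have hprod : a * (t + a) ≤ 0 := mul_nonpos_of_nonneg_of_nonpos ha0 hta
    have hyz : y - (z - τ • n) = (y - x) + (a + τ) • n := by
      rw [hxzn]; module
    have hnorm2 : ‖(y - x) + (a + τ) • n‖ ^ 2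
        = ‖y - x‖ ^ 2 + 2 * ((a + τ) * t) + (a + τ) ^ 2 := by
      rw [norm_add_sq_real, real_inner_smul_right, norm_smul, Real.norm_eq_abs,
        abs_of_nonneg (by linarith), hn, mul_one, ← htdef]
      try ring
    have hsq : ‖y - (z - τ • n)‖ ^ 2 ≤ τ ^ 2 := by
      rw [hyz, hnorm2]
      nlinarith
    have hymem : y ∈ Metric.closedBall (z - τ • n) τ := by
      rw [mem_closedBall_iff_norm]
      calc ‖y - (z - τ • n)‖ = √(‖y - (z - τ • n)‖ ^ 2) := by
            rw [Real.sqrt_sq (norm_nonneg _)]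
        _ ≤ √(τ ^ 2) := Real.sqrt_le_sqrt hsq
        _ = τ := Real.sqrt_sq hτ.le
    have hyeqz : y = z := by
      have : y ∈ Metric.closedBall (z - τ • n) τ ∩ A := ⟨hymem, hy2⟩
      rw [hout] at this
      exact this
    -- then t = -a, contradiction
    have htz : t = -a := by
      rw [htdef, hyeqz, hxzn]
      have : z - (z + a • n) = -(a • n) := by abel
      rw [this, inner_neg_left, real_inner_smul_left, hnn]
      ring
    rw [htz] at hcon
    linarith
  -- volumes
  set cb := Metric.closedBall x r with hcb
  have hfin : ∀ S : Set (EuclideanSpace ℝ (Fin (m+1))), S ⊆ cb → volume S ≠ ⊤ := by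
    intro S hS
    exact ((measure_mono hS).trans_lt measure_closedBall_lt_top).ne
  have hmeasH : ∀ c : ℝ, MeasurableSet {y : EuclideanSpace ℝ (Fin (m+1)) | c ≤ ⟪y - x, n⟫} := by
    intro c
    have hcont : Continuous fun y : EuclideanSpace ℝ (Fin (m+1)) => ⟪y - x, n⟫ :=
      (continuous_id.sub continuous_const).inner continuous_const
    exact (isClosed_le continuous_const hcont).measurableSet
  have hVI := vol_ball_halfspace m x n hn r hr0 (δp - a) b hb
  have hVO := vol_ball_halfspace m x n hn r hr0 (-δm - a) b hb
  have hVM := vol_ball_halfspace m x n hn r hr0 (-a) b hb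
  set VI := volume (cb ∩ {y | δp - a ≤ ⟪y - x, n⟫}) with hVIdef
  set VO := volume (cb ∩ {y | -δm - a ≤ ⟪y - x, n⟫}) with hVOdef
  set VM := volume (cb ∩ {y | -a ≤ ⟪y - x, n⟫}) with hVMdef
  set VA := volume (cb ∩ A) with hVAdef
  have hfinVI : VI ≠ ⊤ := hfin _ (inter_subset_left)
  have hfinVO : VO ≠ ⊤ := hfin _ (inter_subset_left)
  have hfinVM : VM ≠ ⊤ := hfin _ (inter_subset_left)
  have hfinVA : VA ≠ ⊤ := hfin _ (inter_subset_left)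
  -- ordering
  have hIA : VI ≤ VA := measure_mono hIncl1
  have hAO : VA ≤ VO := measure_mono hIncl2
  have hIM : VI ≤ VM := measure_mono (inter_subset_inter_right _ (fun y hy => by
    simp only [mem_setOf_eq] at *; linarith))
  have hMO : VM ≤ VO := measure_mono (inter_subset_inter_right _ (fun y hy => by
    simp only [mem_setOf_eq] at *; linarith))
  -- strip decomposition
  set Strip := cb ∩ {y : EuclideanSpace ℝ (Fin (m+1)) | ⟪y - x, n⟫ ∈ Ico (-δm - a) (δp - a)}
    with hStrip
  have hdecomp : cb ∩ {y | -δm - a ≤ ⟪y - x, n⟫}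
      = (cb ∩ {y | δp - a ≤ ⟪y - x, n⟫}) ∪ Strip := by
    ext y
    simp only [hStrip, mem_inter_iff, mem_union, mem_setOf_eq, mem_Ico]
    constructor
    · rintro ⟨h1, h2⟩
      rcases le_or_gt (δp - a) ⟪y - x, n⟫ with h | h
      · exact Or.inl ⟨h1, h⟩
      · exact Or.inr ⟨h1, h2, h⟩
    · rintro (⟨h1, h2⟩ | ⟨h1, h2, h3⟩)
      · exact ⟨h1, by linarith⟩
      · exact ⟨h1, h2⟩
  have hdisj : Disjoint (cb ∩ {y | δp - a ≤ ⟪y - x, n⟫}) Strip := by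
    rw [Set.disjoint_left]
    rintro y ⟨-, h1⟩ ⟨-, h2⟩
    simp only [mem_setOf_eq, mem_Ico] at *
    linarith [h2.2]
  have hmeasStrip : MeasurableSet Strip := by
    apply MeasurableSet.inter
    · exact measurableSet_closedBall
    · have hcont : Continuous fun y : EuclideanSpace ℝ (Fin (m+1)) => ⟪y - x, n⟫ :=
        (continuous_id.sub continuous_const).inner continuous_const
      exact hcont.measurable measurableSet_Ico
  have hsum : VO = VI + volume Strip := by
    rw [hVOdef, hdecomp, measure_union hdisj hmeasStrip]
  have hfinStrip : volume Strip ≠ ⊤ := hfin _ (inter_subset_left)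
  -- strip volume bound
  have hstripbd : (volume Strip).toReal ≤ 2 * ubv m * r ^ (m + 2) / τ := by
    have hb1 : volume Strip ≤ volume (cb ∩ {y | ⟪y - x, n⟫ ∈ Icc (-δm - a) (δp - a)}) :=
      measure_mono (inter_subset_inter_right _ (fun y hy => Ico_subset_Icc_self hy))
    have hb2 := vol_ball_slab m x n hn r hr0 (-δm - a) (δp - a) b hb
    have hb3 : volume Strip ≤ ENNReal.ofReal (δp - a - (-δm - a))
        * volume (Metric.closedBall (0 : EuclideanSpace ℝ (Fin m)) r) := hb1.trans hb2
    have hrhs : (ENNReal.ofReal (δp - a - (-δm - a))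
        * volume (Metric.closedBall (0 : EuclideanSpace ℝ (Fin m)) r)).toReal
        = (δp + δm) * (r ^ m * ubv m) := by
      rw [ENNReal.toReal_mul, ENNReal.toReal_ofReal (by linarith),
        vol_closedBall_m_toReal m r hr0.le]
      ring_nf
    have := ENNReal.toReal_mono (by
      refine ENNReal.mul_ne_top ENNReal.ofReal_ne_top measure_closedBall_lt_top.ne) hb3
    rw [hrhs] at this
    refine this.trans (le_of_eq ?_)
    rw [hδp, hδm]
    field_simp
    ring
  -- middle volume value
  have hsv : slabVol (m+1) (a / r)
      = (volume {u : EuclideanSpace ℝ (Fin (m+1)) | ‖u‖ ≤ 1 ∧ u 0 ∈ Icc 0 (a / r)}).toReal := by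
    unfold slabVol
    congr 2
    ext u
    simp only [mem_setOf_eq]
    constructor
    · rintro ⟨h1, _, h2⟩; exact ⟨h1, h2⟩
    · rintro ⟨h1, h2⟩; exact ⟨h1, Nat.succ_pos m, h2⟩
  have hcap0 : (volume (capSet m 0)).toReal = ubv (m+1) / 2 := by
    have := two_vol_capSet_zero m
    linarith
  have hVMval : VM.toReal = (ubv (m+1) / 2 + slabVol (m+1) (a / r)) * r ^ (m+1) := by
    rw [hVM, ENNReal.toReal_mul, ENNReal.toReal_ofReal (by positivity)]
    have hc : -a / r = -(a / r) := by ring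
    rw [hc, vol_capSet_neg m (a/r) (by positivity), hcap0, ← hsv]
    ring
  -- final arithmetic
  have hordI : VI.toReal ≤ VA.toReal := ENNReal.toReal_mono hfinVA hIA
  have hordO : VA.toReal ≤ VO.toReal := ENNReal.toReal_mono hfinVO hAO
  have hordIM : VI.toReal ≤ VM.toReal := ENNReal.toReal_mono hfinVM hIM
  have hordMO : VM.toReal ≤ VO.toReal := ENNReal.toReal_mono hfinVO hMO
  have hsumR : VO.toReal = VI.toReal + (volume Strip).toReal := by
    rw [hsum, ENNReal.toReal_add hfinVI hfinStrip]
  have hgoal : |VA.toReal - VM.toReal| ≤ 2 * ubv m * r ^ (m + 2) / τ := by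
    rw [abs_le]
    constructor <;> nlinarith
  have hd1 : m + 1 - 1 = m := rfl
  rw [hd1]
  calc |(volume (Metric.closedBall x r ∩ A)).toReal
        - (ubv (m+1) / 2 + slabVol (m+1) (a / r)) * r ^ (m+1)|
      = |VA.toReal - VM.toReal| := by rw [hVMval]
    _ ≤ 2 * ubv m * r ^ (m + 2) / τ := hgoal
    _ = 2 * ubv m * r ^ (m + 1 + 1) / τ := by norm_num
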